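/- Let 𝔄 be an abelian category and F : 𝔄 → Ab an additive, faithful, exact functor to the category of abelian groups. For an object X of 𝔄 set E = End_𝔄(X); for any object Y, Hom_𝔄(X,Y) is a right E-module by precomposition and F(X) is a left E-module via F. Then X is a simple object of 𝔄 if and only if both: (a) E is a division ring; and (b) for every object Y of 𝔄, the evaluation map Hom_𝔄(X,Y) ⊗_E F(X) → F(Y), f ⊗ x ↦ F(f)(x), is injective. -/

import Mathlib

open CategoryTheory
open CategoryTheory.Limits
open scoped TensorProduct

universe w v u

noncomputable section

variable {𝔄 : Type u} [Category.{v} 𝔄] [Abelian 𝔄]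

/-- The evaluation map `Hom_𝔄(X,Y) ⊗_ℤ F(X) → F(Y)`, `f ⊗ x ↦ F(f)(x)`. -/
def evTensor (F : 𝔄 ⥤ AddCommGrpCat.{w}) [F.Additive] (X Y : 𝔄) :
    ((X ⟶ Y) ⊗[ℤ] (F.obj X)) →ₗ[ℤ] F.obj Y :=
  TensorProduct.lift <| LinearMap.mk₂ ℤ (fun f x => F.map f x)
    (fun f g x => by
      show F.map (f + g) x = F.map f x + F.map g x
      rw [F.map_add]; first | rfl | simp)
    (fun n f x => by
      show F.map (n • f) x = n • F.map f x
      rw [F.map_zsmul]; first | rfl | simp)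
    (fun f x y => by
      show F.map f (x + y) = F.map f x + F.map f y
      rw [map_add])
    (fun n f x => by
      show F.map f (n • x) = n • F.map f x
      rw [map_zsmul])

/-- The set of relations defining the tensor product over `E = End X`:
`(e ≫ f) ⊗ x − f ⊗ F(e)(x)`, for `e ∈ End X` (acting on `Hom(X,Y)` by precomposition
and on `F(X)` via `F`). -/
def relSet (F : 𝔄 ⥤ AddCommGrpCat.{w}) (X Y : 𝔄) : Set ((X ⟶ Y) ⊗[ℤ] (F.obj X)) :=
  {t | ∃ (e : X ⟶ X) (f : X ⟶ Y) (x : F.obj X),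
    t = (e ≫ f) ⊗ₜ[ℤ] x - f ⊗ₜ[ℤ] (F.map e x)}

attribute [local instance] CategoryTheory.Abelian.hasFiniteBiproducts

namespace EvAux

set_option linter.unusedSectionVars false

lemma comp_desc {n : ℕ} {X Y W : 𝔄} (f : Fin n → (X ⟶ Y))
    (g : W ⟶ ⨁ fun _ : Fin n => X) :
    g ≫ biproduct.desc f = ∑ j, (g ≫ biproduct.π _ j) ≫ f j := by
  rw [← Category.id_comp (biproduct.desc f), ← biproduct.total,
    Preadditive.sum_comp, Preadditive.comp_sum]
  refine Finset.sum_congr rfl fun j _ => by simp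

/-- Manual right-`End X` linear independence. -/
def Indep {n : ℕ} {X Y : 𝔄} (f : Fin n → (X ⟶ Y)) : Prop :=
  ∀ e : Fin n → (X ⟶ X), (∑ i, e i ≫ f i) = 0 → ∀ i, e i = 0

lemma mono_desc {X Y : 𝔄} [Simple X] :
    ∀ (n : ℕ) (f : Fin n → (X ⟶ Y)), Indep f → Mono (biproduct.desc f) := by
  intro n
  induction n with
  | zero =>
    intro f _
    exact Preadditive.mono_of_cancel_zero _ fun g _ =>
      biproduct.hom_ext g 0 fun j => j.elim0
  | succ n ih =>
    intro f hf
    have hC : ∀ {W : 𝔄} (a : W ⟶ ⨁ fun _ : Fin (n+1) => X),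
        a ≫ biproduct.desc f = 0 → a ≫ biproduct.π _ (Fin.last n) = 0 → a = 0 := by
      intro W a h1 h2
      have hf' : Indep (fun i : Fin n => f i.castSucc) := by
        intro e' he' i
        have := hf (fun j => Fin.lastCases 0 (fun i => e' i) j) ?_ i.castSucc
        · simpa using this
        · rw [Fin.sum_univ_castSucc]
          simpa using he'
      haveI := ih (fun i => f i.castSucc) hf'
      have hb : biproduct.lift (fun i : Fin n => a ≫ biproduct.π _ i.castSucc) ≫
          biproduct.desc (fun i : Fin n => f i.castSucc) = 0 := by
        rw [comp_desc]
        have ha : (0 : W ⟶ Y) = ∑ j : Fin (n+1), (a ≫ biproduct.π _ j) ≫ f j := by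
          rw [← comp_desc, h1]
        rw [Fin.sum_univ_castSucc] at ha
        simp only [biproduct.lift_π]
        rw [h2, zero_comp, add_zero] at ha
        exact ha.symm
      have b0 := zero_of_comp_mono _ hb
      apply biproduct.hom_ext
      intro j
      refine Fin.lastCases ?_ ?_ j
      · simpa using h2
      · intro i
        have := congrArg (fun t => t ≫ biproduct.π (fun _ : Fin n => X) i) b0
        simpa using this
    set k := kernel.ι (biproduct.desc f) with hk
    set π := k ≫ biproduct.π (fun _ : Fin (n+1) => X) (Fin.last n) with hπdef
    have mπ : Mono π := by
      refine Preadditive.mono_of_cancel_zero _ fun {P} g hg => ?_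
      have h1 : (g ≫ k) ≫ biproduct.desc f = 0 := by
        rw [Category.assoc, kernel.condition, comp_zero]
      have h2 : (g ≫ k) ≫ biproduct.π _ (Fin.last n) = 0 := by
        rw [Category.assoc, ← hπdef]; exact hg
      have := hC (g ≫ k) h1 h2
      exact zero_of_comp_mono k this
    by_cases hπ : π = 0
    · have hk0 : k = 0 := hC k (kernel.condition _) hπ
      exact Abelian.mono_of_kernel_ι_eq_zero _ hk0
    · haveI : IsIso π := isIso_of_mono_of_nonzero hπ
      exfalso
      have he : ∑ j : Fin (n+1), (inv π ≫ k ≫ biproduct.π _ j) ≫ f j = 0 := by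
        have h1 : (inv π ≫ k) ≫ biproduct.desc f = 0 := by
          rw [Category.assoc, kernel.condition, comp_zero]
        rw [comp_desc] at h1
        simpa only [Category.assoc] using h1
      have := hf (fun j => inv π ≫ k ≫ biproduct.π _ j) he (Fin.last n)
      rw [← hπdef, IsIso.inv_hom_id] at this
      exact id_nonzero X this

variable (F : 𝔄 ⥤ AddCommGrpCat.{w}) [F.Additive] [PreservesFiniteLimits F]

lemma evTensor_tmul {X Y : 𝔄} (f : X ⟶ Y) (x : F.obj X) :
    evTensor F X Y (f ⊗ₜ[ℤ] x) = F.map f x := rfl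

lemma span_le_ker (X Y : 𝔄) :
    Submodule.span ℤ (relSet F X Y) ≤ LinearMap.ker (evTensor F X Y) := by
  rw [Submodule.span_le]
  rintro t ⟨e, f, x, rfl⟩
  simp only [SetLike.mem_coe, LinearMap.mem_ker, map_sub, evTensor_tmul, F.map_comp]
  rw [comp_apply, sub_self]

lemma eq_zero_of_indep {X Y : 𝔄} [Simple X] {n : ℕ} (f : Fin n → (X ⟶ Y)) (hf : Indep f)
    (x : Fin n → F.obj X) (hx : ∑ i, F.map (f i) (x i) = 0) : ∀ j, x j = 0 := by
  haveI := mono_desc n f hf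
  haveI : Mono (F.map (biproduct.desc f)) := inferInstance
  set ξ : F.obj (⨁ fun _ : Fin n => X) :=
    ∑ i, F.map (biproduct.ι (fun _ : Fin n => X) i) (x i) with hξdef
  have hξ : F.map (biproduct.desc f) ξ = 0 := by
    rw [hξdef, map_sum]
    rw [← hx]
    refine Finset.sum_congr rfl fun i _ => ?_
    rw [← comp_apply, ← F.map_comp, biproduct.ι_desc]
  have hξ0 : ξ = 0 := by
    have inj := (AddCommGrpCat.mono_iff_injective (F.map (biproduct.desc f))).mp inferInstance
    apply inj
    rw [hξ, map_zero]
  intro j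
  have hxj : F.map (biproduct.π (fun _ : Fin n => X) j) ξ = x j := by
    rw [hξdef, map_sum]
    rw [Finset.sum_eq_single j]
    · rw [← comp_apply, ← F.map_comp, biproduct.ι_π_self, F.map_id]
      rfl
    · intro i _ hij
      rw [← comp_apply, ← F.map_comp, biproduct.ι_π_ne _ hij, F.map_zero]
      rfl
    · intro h; exact absurd (Finset.mem_univ j) h
  rw [← hxj, hξ0, map_zero]

lemma exists_repr {X Y : 𝔄} (t : (X ⟶ Y) ⊗[ℤ] F.obj X) :
    ∃ (n : ℕ) (f : Fin n → (X ⟶ Y)) (x : Fin n → F.obj X), t = ∑ i, f i ⊗ₜ[ℤ] x i := by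
  induction t with
  | zero => exact ⟨0, fun i => i.elim0, fun i => i.elim0, by simp⟩
  | tmul f x => exact ⟨1, fun _ => f, fun _ => x, by simp⟩
  | add a b ha hb =>
    obtain ⟨n, f, x, rfl⟩ := ha
    obtain ⟨m, g, y, rfl⟩ := hb
    refine ⟨n + m, Fin.addCases f g, Fin.addCases x y, ?_⟩
    rw [Fin.sum_univ_add]
    simp

lemma ker_le_span' {X Y : 𝔄} [Simple X] :
    ∀ (n : ℕ) (f : Fin n → (X ⟶ Y)) (x : Fin n → F.obj X),
    (∑ i, F.map (f i) (x i)) = 0 →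
      (∑ i, f i ⊗ₜ[ℤ] x i) ∈ Submodule.span ℤ (relSet F X Y) := by
  intro n
  induction n with
  | zero => intro f x _; simp
  | succ n ih =>
    intro f x hx
    by_cases hf : Indep f
    · have hz := eq_zero_of_indep F f hf x hx
      simp [hz]
    · simp only [Indep, not_forall] at hf
      obtain ⟨e, he, j, hej⟩ := hf
      haveI : IsIso (e j) := isIso_of_hom_simple hej
      set d : Fin n → (X ⟶ X) := fun i => -(inv (e j) ≫ e (j.succAbove i)) with hd
      have hfj : f j = ∑ i, d i ≫ f (j.succAbove i) := by
        have h1 : e j ≫ f j = -∑ i : Fin n, e (j.succAbove i) ≫ f (j.succAbove i) := by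
          rw [Fin.sum_univ_succAbove _ j] at he
          exact eq_neg_of_add_eq_zero_left he
        calc f j = inv (e j) ≫ (e j ≫ f j) := by simp
          _ = inv (e j) ≫ (-∑ i : Fin n, e (j.succAbove i) ≫ f (j.succAbove i)) := by rw [h1]
          _ = ∑ i, d i ≫ f (j.succAbove i) := by
              simp [hd, Preadditive.comp_sum, Preadditive.comp_neg, Preadditive.neg_comp,
                Finset.sum_neg_distrib, Category.assoc]
      clear_value d
      clear hd
      set x' : Fin n → F.obj X := fun i => x (j.succAbove i) + F.map (d i) (x j) with hx'def
      have hx' : ∑ i, F.map (f (j.succAbove i)) (x' i) = 0 := by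
        have h0 := hx
        rw [Fin.sum_univ_succAbove _ j] at h0
        have h2 : ∑ i, F.map (f (j.succAbove i)) (F.map (d i) (x j)) = F.map (f j) (x j) := by
          calc ∑ i, F.map (f (j.succAbove i)) (F.map (d i) (x j))
              = ∑ i, F.map (d i ≫ f (j.succAbove i)) (x j) :=
                Finset.sum_congr rfl fun i _ => by rw [F.map_comp, comp_apply]
            _ = (∑ i, F.map (d i ≫ f (j.succAbove i))) (x j) :=
                (map_sum ((AddMonoidHom.eval (x j)).comp
                  (AddCommGrpCat.homAddEquiv (M := F.obj X) (N := F.obj Y)).toAddMonoidHom)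
                  (fun i => F.map (d i ≫ f (j.succAbove i))) Finset.univ).symm
            _ = F.map (∑ i, d i ≫ f (j.succAbove i)) (x j) := by rw [← Functor.map_sum]
            _ = F.map (f j) (x j) := by rw [← hfj]
        calc ∑ i, F.map (f (j.succAbove i)) (x' i)
            = ∑ i, (F.map (f (j.succAbove i)) (x (j.succAbove i))
                + F.map (f (j.succAbove i)) (F.map (d i) (x j))) := by
              refine Finset.sum_congr rfl fun i _ => ?_
              rw [hx'def]; exact map_add _ _ _
          _ = (∑ i, F.map (f (j.succAbove i)) (x (j.succAbove i))) + F.map (f j) (x j) := by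
              rw [Finset.sum_add_distrib, h2]
          _ = 0 := by rw [add_comm] at h0; exact h0
      clear_value x'
      have hmem := ih (fun i => f (j.succAbove i)) x' hx'
      have hrel : (∑ i : Fin (n+1), f i ⊗ₜ[ℤ] x i)
            - ∑ i : Fin n, f (j.succAbove i) ⊗ₜ[ℤ] x' i
          = ∑ i : Fin n, ((d i ≫ f (j.succAbove i)) ⊗ₜ[ℤ] x j
              - f (j.succAbove i) ⊗ₜ[ℤ] F.map (d i) (x j)) := by
        rw [Fin.sum_univ_succAbove _ j, hfj, TensorProduct.sum_tmul]
        simp only [hx'def, TensorProduct.tmul_add]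
        rw [Finset.sum_add_distrib, Finset.sum_sub_distrib]
        abel
      have hrelmem : (∑ i : Fin (n+1), f i ⊗ₜ[ℤ] x i)
            - ∑ i : Fin n, f (j.succAbove i) ⊗ₜ[ℤ] x' i ∈ Submodule.span ℤ (relSet F X Y) := by
        rw [hrel]
        exact Submodule.sum_mem _ fun i _ =>
          Submodule.subset_span ⟨d i, f (j.succAbove i), x j, rfl⟩
      have := Submodule.add_mem _ hrelmem hmem
      simpa using this

lemma exists_functional {X Y : 𝔄} (h1 : 𝟙 X ≠ (0 : X ⟶ X))
    (h2 : ∀ f : X ⟶ X, f ≠ 0 → IsIso f) {q : X ⟶ Y} (hq : q ≠ 0) :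
    ∃ Λ : (X ⟶ Y) →+ (X ⟶ X), Λ q = 𝟙 X ∧
      ∀ (e : X ⟶ X) (f : X ⟶ Y), Λ (e ≫ f) = e ≫ Λ f := by
  letI : Nontrivial (End (Opposite.op X)) :=
    ⟨⟨𝟙 (Opposite.op X), 0, fun h => h1 (by
      have := congrArg Quiver.Hom.unop h
      simpa using this)⟩⟩
  letI : DivisionRing (End (Opposite.op X)) := DivisionRing.ofIsUnitOrEqZero (fun a => by
    by_cases ha : a.unop = 0
    · right
      exact Quiver.Hom.unop_inj ha
    · left
      haveI : IsIso a.unop := h2 _ ha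
      haveI : IsIso a := (Quiver.Hom.op_unop a) ▸ (isIso_op a.unop)
      exact ⟨⟨a, inv a, IsIso.inv_hom_id a, IsIso.hom_inv_id a⟩, rfl⟩)
  letI : Module (End (Opposite.op X)) (X ⟶ Y) := Module.compHom (X ⟶ Y)
    ({ toFun := fun a => MulOpposite.op a.unop
       map_one' := rfl
       map_mul' := fun _ _ => rfl
       map_zero' := rfl
       map_add' := fun _ _ => rfl } : End (Opposite.op X) →+* (End X)ᵐᵒᵖ)
  have hind : LinearIndepOn (End (Opposite.op X)) id ({q} : Set (X ⟶ Y)) :=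
    LinearIndepOn.singleton (v := id) hq
  let B := Module.Basis.extend hind
  have hqmem : q ∈ hind.extend (Set.subset_univ _) := hind.subset_extend _ rfl
  let Λ' := B.coord ⟨q, hqmem⟩
  refine ⟨AddMonoidHom.mk' (fun f => (Λ' f).unop) (fun f g => by
    show (Λ' (f + g)).unop = (Λ' f).unop + (Λ' g).unop
    rw [map_add]; rfl), ?_, ?_⟩
  · have hB : B ⟨q, hqmem⟩ = q := Module.Basis.extend_apply_self hind ⟨q, hqmem⟩
    show (Λ' q).unop = 𝟙 X
    have : Λ' q = 1 := by
      rw [← hB]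
      simp [Λ', Module.Basis.coord_apply, Module.Basis.repr_self]
    rw [this]
    rfl
  · intro e f
    show (Λ' (e ≫ f)).unop = e ≫ (Λ' f).unop
    let a : End (Opposite.op X) := e.op
    have hsm : e ≫ f = a • f := rfl
    rw [hsm, map_smul]
    rfl

end EvAux

/-- An object `X` of an abelian category `𝔄` is simple iff `End_𝔄(X)` is a division ring
and, for every object `Y`, the evaluation map `Hom_𝔄(X,Y) ⊗_{End X} F(X) → F(Y)` is
injective (the latter being expressed by saying that the kernel of the evaluation map on
the `ℤ`-tensor product is exactly the span of the balancing relations over `End X`).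
Here `F : 𝔄 → Ab` is an additive, faithful, exact functor. -/
theorem simple_iff_division_ring_and_evaluation_injective
    (F : 𝔄 ⥤ AddCommGrpCat.{w}) [F.Additive] [F.Faithful]
    [PreservesFiniteLimits F] [PreservesFiniteColimits F] (X : 𝔄) :
    Simple X ↔
      ((𝟙 X ≠ (0 : X ⟶ X)) ∧ ∀ f : X ⟶ X, f ≠ 0 → IsIso f) ∧
      (∀ Y : 𝔄, LinearMap.ker (evTensor F X Y) = Submodule.span ℤ (relSet F X Y)) := by
  constructor
  · intro hX
    refine ⟨⟨id_nonzero X, fun f hf => isIso_of_hom_simple hf⟩, fun Y => ?_⟩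
    refine le_antisymm ?_ (EvAux.span_le_ker F X Y)
    intro t ht
    obtain ⟨n, f, x, rfl⟩ := EvAux.exists_repr F t
    refine EvAux.ker_le_span' F n f x ?_
    rw [LinearMap.mem_ker, map_sum] at ht
    simpa [EvAux.evTensor_tmul] using ht
  · rintro ⟨⟨h1, h2⟩, h3⟩
    constructor
    intro W i hi
    haveI := hi
    constructor
    · intro hiso h0
      apply h1
      calc 𝟙 X = inv i ≫ i := (IsIso.inv_hom_id i).symm
        _ = inv i ≫ 0 := congrArg (fun t => inv i ≫ t) h0
        _ = 0 := comp_zero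
    · intro hi0
      haveI : Epi i := by
        refine Abelian.epi_of_cokernel_π_eq_zero _ ?_
        by_contra hq
        set Y := cokernel i with hY
        set q : X ⟶ Y := cokernel.π i with hqdef
        have hW1 : 𝟙 W ≠ 0 := fun h => hi0 (by rw [← Category.id_comp i, h, zero_comp])
        have hx : ∃ x : F.obj W, x ≠ 0 := by
          by_contra h
          push_neg at h
          apply hW1
          apply F.map_injective
          rw [F.map_id, F.map_zero]
          refine AddCommGrpCat.ext fun w => ?_
          simpa using h w
        obtain ⟨x, hx0⟩ := hx
        have hmono : Mono (F.map i) := inferInstance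
        have hinj := (AddCommGrpCat.mono_iff_injective (F.map i)).mp hmono
        have hx' : F.map i x ≠ 0 := fun h => hx0 (hinj (by rw [h, map_zero]))
        have hker : (q ⊗ₜ[ℤ] (F.map i x)) ∈ LinearMap.ker (evTensor F X Y) := by
          rw [LinearMap.mem_ker]
          show F.map q (F.map i x) = 0
          rw [← comp_apply, ← F.map_comp, cokernel.condition, F.map_zero]
          rfl
        rw [h3] at hker
        obtain ⟨Λ, hΛq, hΛcomp⟩ := EvAux.exists_functional h1 h2 hq
        let φ : ((X ⟶ Y) ⊗[ℤ] (F.obj X)) →ₗ[ℤ] F.obj X :=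
          TensorProduct.lift <| LinearMap.mk₂ ℤ (fun f x => F.map (Λ f) x)
            (fun f g x => by
              show F.map (Λ (f + g)) x = F.map (Λ f) x + F.map (Λ g) x
              rw [map_add, F.map_add]; first | rfl | simp)
            (fun n f x => by
              show F.map (Λ (n • f)) x = n • F.map (Λ f) x
              rw [map_zsmul, F.map_zsmul]; first | rfl | simp)
            (fun f x y => by
              show F.map (Λ f) (x + y) = F.map (Λ f) x + F.map (Λ f) y
              rw [map_add])
            (fun n f x => by
              show F.map (Λ f) (n • x) = n • F.map (Λ f) x
              rw [map_zsmul])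
        have hφ0 : φ (q ⊗ₜ[ℤ] (F.map i x)) = 0 := by
          refine Submodule.span_induction ?_ ?_ ?_ ?_ hker
          · rintro t ⟨e, g, y, rfl⟩
            rw [map_sub]
            show F.map (Λ (e ≫ g)) y - F.map (Λ g) (F.map e y) = 0
            rw [hΛcomp, F.map_comp, comp_apply, sub_self]
          · exact map_zero φ
          · intro a b _ _ ha hb; rw [map_add, ha, hb, add_zero]
          · intro n a _ ha; rw [map_smul, ha, smul_zero]
        apply hx'
        rw [← hφ0]
        show F.map i x = F.map (Λ q) (F.map i x)
        rw [hΛq, F.map_id]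
        rfl
      exact isIso_of_mono_of_epi i
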